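/- Let α₁, α₂ ∈ (0,2) and let Λ be a probability measure on Δ₁. Then for every θ = (θ₁,θ₂) ∈ ℝ² and every λ > 0, Ψ_{α,Λ}(λ^{1/α₁}θ₁, λ^{1/α₂}θ₂) = λ^{1 − 1/α₁ − 1/α₂} · Ψ_{α,Λ}(θ₁, θ₂), where both sides are understood as values in [0, +∞]. -/

import Mathlib

open MeasureTheory
open scoped ENNReal

/-- The open simplex `Δ₁ = {w ∈ (0,1)² : w₁ + w₂ = 1}`. -/
def Delta1 : Set (ℝ × ℝ) :=
  {w | w.1 ∈ Set.Ioo (0:ℝ) 1 ∧ w.2 ∈ Set.Ioo (0:ℝ) 1 ∧ w.1 + w.2 = 1}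

/-- `Ψ_{α,Λ}(θ) = ∫_0^∞ ∫_{Δ₁} ∏_{k=1,2} [2(rw_k)^{-1/α_k}/((rw_k)^{-2/α_k} + θ_k²)]
Λ(dw) r^{-2} dr`, as a Lebesgue integral of a nonnegative function, valued in `[0,∞]`. -/
noncomputable def Psi (α₁ α₂ : ℝ) (Λ : Measure (ℝ × ℝ)) (θ : ℝ × ℝ) : ℝ≥0∞ :=
  ∫⁻ r in Set.Ioi (0:ℝ),
    (∫⁻ w in Delta1, ENNReal.ofReal
      ((2 * (r * w.1) ^ (-1/α₁) / ((r * w.1) ^ (-2/α₁) + θ.1 ^ 2)) *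
       (2 * (r * w.2) ^ (-1/α₂) / ((r * w.2) ^ (-2/α₂) + θ.2 ^ 2))) ∂Λ)
    * ENNReal.ofReal (r ^ (-2 : ℝ))


lemma rpow_key {α L u θ : ℝ} (hL : 0 < L) (hu : 0 < u) :
    2 * (L⁻¹ * u) ^ (-1/α) / ((L⁻¹ * u) ^ (-2/α) + (L ^ (1/α) * θ) ^ 2)
      = L ^ (-1/α) * (2 * u ^ (-1/α) / (u ^ (-2/α) + θ ^ 2)) := by
  have hmul : ∀ e : ℝ, (L⁻¹ * u) ^ e = L ^ (-e) * u ^ e := by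
    intro e
    rw [Real.mul_rpow (inv_nonneg.2 hL.le) hu.le, Real.inv_rpow hL.le, ← Real.rpow_neg hL.le]
  have h3 : (L ^ (1/α) * θ) ^ 2 = L ^ (2/α) * θ ^ 2 := by
    have he : (1/α) * ((2:ℕ):ℝ) = 2/α := by push_cast; ring
    rw [mul_pow, ← Real.rpow_natCast (L ^ (1/α)) 2, ← Real.rpow_mul hL.le, he]
  have hd : 0 < u ^ (-2/α) + θ ^ 2 := by positivity
  have hL2 : (0:ℝ) < L ^ (2/α) := Real.rpow_pos_of_pos hL _
  rw [hmul, hmul, h3, show -(-1/α) = 1/α by ring, show -(-2/α) = 2/α by ring]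
  have hcomb : L ^ (-1/α) * L ^ (2/α) = L ^ (1/α) := by
    rw [← Real.rpow_add hL]; ring_nf
  field_simp
  rw [← hcomb]; ring

lemma lintegral_Ioi_scale (F : ℝ → ℝ≥0∞) {L : ℝ} (hL : 0 < L) :
    ∫⁻ r in Set.Ioi (0:ℝ), F r
      = ENNReal.ofReal L⁻¹ * ∫⁻ x in Set.Ioi (0:ℝ), F (L⁻¹ * x) := by
  have hne : (L:ℝ)⁻¹ ≠ 0 := by positivity
  have hmap : Measure.map (fun x : ℝ => L⁻¹ * x) volume = ENNReal.ofReal L • volume := by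
    rw [Real.map_volume_mul_left hne, inv_inv, abs_of_pos hL]
  have h1 : ∫⁻ x, Set.indicator (Set.Ioi 0) F (L⁻¹ * x) ∂volume
      = ENNReal.ofReal L * ∫⁻ y, Set.indicator (Set.Ioi 0) F y ∂volume := by
    have he := MeasureTheory.lintegral_map_equiv (μ := volume)
      (Set.indicator (Set.Ioi 0) F) (Homeomorph.mulLeft₀ L⁻¹ hne).toMeasurableEquiv
    simp only [Homeomorph.toMeasurableEquiv_coe, Homeomorph.coe_mulLeft₀] at he
    rw [hmap, lintegral_smul_measure] at he
    exact he.symm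
  have hind : ∀ x : ℝ, Set.indicator (Set.Ioi 0) (fun y => F (L⁻¹ * y)) x
      = Set.indicator (Set.Ioi 0) F (L⁻¹ * x) := by
    intro x
    simp only [Set.indicator_apply, Set.mem_Ioi]
    by_cases hx : (0:ℝ) < x
    · rw [if_pos hx, if_pos (by positivity)]
    · push_neg at hx
      rw [if_neg (not_lt.2 hx), if_neg (not_lt.2
        (mul_nonpos_of_nonneg_of_nonpos (inv_pos.2 hL).le hx))]
  rw [← lintegral_indicator measurableSet_Ioi, ← lintegral_indicator measurableSet_Ioi]
  calc ∫⁻ x, Set.indicator (Set.Ioi 0) F x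
      = ENNReal.ofReal L⁻¹ * (ENNReal.ofReal L * ∫⁻ y, Set.indicator (Set.Ioi 0) F y) := by
        rw [← mul_assoc, ← ENNReal.ofReal_mul (by positivity), inv_mul_cancel₀ hL.ne',
          ENNReal.ofReal_one, one_mul]
    _ = ENNReal.ofReal L⁻¹ * ∫⁻ x, Set.indicator (Set.Ioi 0) F (L⁻¹ * x) := by rw [h1]
    _ = ENNReal.ofReal L⁻¹ * ∫⁻ x, Set.indicator (Set.Ioi 0) (fun y => F (L⁻¹ * y)) x := by
        simp_rw [hind]

lemma measurableSet_Delta1' : MeasurableSet Delta1 := by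
  unfold Delta1
  exact ((measurable_fst measurableSet_Ioo).inter
    ((measurable_snd measurableSet_Ioo).inter
      (measurableSet_eq_fun (measurable_fst.add measurable_snd) measurable_const)))

theorem stmt_5 (α₁ α₂ : ℝ) (hα₁ : α₁ ∈ Set.Ioo (0:ℝ) 2) (hα₂ : α₂ ∈ Set.Ioo (0:ℝ) 2)
    (Λ : Measure (ℝ × ℝ)) [IsProbabilityMeasure Λ] (hΛ : Λ Delta1ᶜ = 0)
    (θ₁ θ₂ lam : ℝ) (hlam : 0 < lam) :
    Psi α₁ α₂ Λ (lam ^ (1/α₁) * θ₁, lam ^ (1/α₂) * θ₂)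
      = ENNReal.ofReal (lam ^ (1 - 1/α₁ - 1/α₂)) * Psi α₁ α₂ Λ (θ₁, θ₂) := by
  unfold Psi
  dsimp only
  rw [lintegral_Ioi_scale _ hlam]
  have hstep : ∀ x ∈ Set.Ioi (0:ℝ),
      (∫⁻ w in Delta1, ENNReal.ofReal
        ((2 * ((lam⁻¹ * x) * w.1) ^ (-1/α₁) /
            (((lam⁻¹ * x) * w.1) ^ (-2/α₁) + (lam ^ (1/α₁) * θ₁) ^ 2)) *
         (2 * ((lam⁻¹ * x) * w.2) ^ (-1/α₂) /
            (((lam⁻¹ * x) * w.2) ^ (-2/α₂) + (lam ^ (1/α₂) * θ₂) ^ 2))) ∂Λ)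
        * ENNReal.ofReal ((lam⁻¹ * x) ^ (-2:ℝ))
      = (ENNReal.ofReal (lam ^ (-1/α₁ + -1/α₂)) * ENNReal.ofReal (lam ^ (2:ℝ))) *
        ((∫⁻ w in Delta1, ENNReal.ofReal
          ((2 * (x * w.1) ^ (-1/α₁) / ((x * w.1) ^ (-2/α₁) + θ₁ ^ 2)) *
           (2 * (x * w.2) ^ (-1/α₂) / ((x * w.2) ^ (-2/α₂) + θ₂ ^ 2))) ∂Λ)
          * ENNReal.ofReal (x ^ (-2:ℝ))) := by
    intro x hx
    have hx0 : (0:ℝ) < x := hx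
    have hinner : (∫⁻ w in Delta1, ENNReal.ofReal
        ((2 * ((lam⁻¹ * x) * w.1) ^ (-1/α₁) /
            (((lam⁻¹ * x) * w.1) ^ (-2/α₁) + (lam ^ (1/α₁) * θ₁) ^ 2)) *
         (2 * ((lam⁻¹ * x) * w.2) ^ (-1/α₂) /
            (((lam⁻¹ * x) * w.2) ^ (-2/α₂) + (lam ^ (1/α₂) * θ₂) ^ 2))) ∂Λ)
        = ENNReal.ofReal (lam ^ (-1/α₁ + -1/α₂)) *
          ∫⁻ w in Delta1, ENNReal.ofReal
          ((2 * (x * w.1) ^ (-1/α₁) / ((x * w.1) ^ (-2/α₁) + θ₁ ^ 2)) *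
           (2 * (x * w.2) ^ (-1/α₂) / ((x * w.2) ^ (-2/α₂) + θ₂ ^ 2))) ∂Λ := by
      rw [← lintegral_const_mul' _ _ ENNReal.ofReal_ne_top]
      refine setLIntegral_congr_fun measurableSet_Delta1' ?_
      intro w hw
      obtain ⟨hw1, hw2, -⟩ := hw
      beta_reduce
      rw [mul_assoc lam⁻¹ x w.1, mul_assoc lam⁻¹ x w.2,
        rpow_key hlam (mul_pos hx0 hw1.1), rpow_key hlam (mul_pos hx0 hw2.1),
        mul_mul_mul_comm, ← Real.rpow_add hlam,
        ENNReal.ofReal_mul (Real.rpow_nonneg hlam.le _)]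
    have houter : ENNReal.ofReal ((lam⁻¹ * x) ^ (-2:ℝ))
        = ENNReal.ofReal (lam ^ (2:ℝ)) * ENNReal.ofReal (x ^ (-2:ℝ)) := by
      rw [Real.mul_rpow (inv_nonneg.2 hlam.le) hx0.le, Real.inv_rpow hlam.le,
        ← Real.rpow_neg hlam.le, show -(-2:ℝ) = 2 by norm_num,
        ENNReal.ofReal_mul (Real.rpow_nonneg hlam.le _)]
    rw [hinner, houter]; ring
  rw [setLIntegral_congr_fun measurableSet_Ioi hstep,
    lintegral_const_mul' _ _ (ENNReal.mul_ne_top ENNReal.ofReal_ne_top ENNReal.ofReal_ne_top),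
    ← mul_assoc, ← mul_assoc, ← ENNReal.ofReal_mul (by positivity),
    ← ENNReal.ofReal_mul (by positivity)]
  congr 2
  rw [← Real.rpow_neg_one lam, ← Real.rpow_add hlam, ← Real.rpow_add hlam]
  congr 1; ring
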